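/- A rational prime p ≡ 1 (mod 3) can be written as p = a² − ab + b² for some integers a, b. -/

import Mathlib

/-- If `p ≡ 1 (mod 3)` is prime, then `-3` is a square in `ZMod p`. -/
lemma aux_neg_three_is_sq (p : ℕ) (hp : p.Prime) (h : p % 3 = 1) :
    ∃ y : ZMod p, y ^ 2 = -3 := by
  haveI : Fact p.Prime := ⟨hp⟩
  have h3 : 3 ∣ Fintype.card (ZMod p)ˣ := by
    rw [ZMod.card_units]
    omega
  obtain ⟨u, hu⟩ := exists_prime_orderOf_dvd_card 3 h3
  set ω : ZMod p := (u : ZMod p) with hω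
  have hord3 : u ^ 3 = 1 := by rw [← hu]; exact pow_orderOf_eq_one u
  have hω3 : ω ^ 3 = 1 := by
    have := congrArg (Units.val) hord3
    push_cast at this
    exact this
  have hωne : ω ≠ 1 := by
    intro heq
    have : u = 1 := Units.ext heq
    rw [this, orderOf_one] at hu
    omega
  have hrel : ω ^ 2 + ω + 1 = 0 := by
    have hfac : (ω - 1) * (ω ^ 2 + ω + 1) = 0 := by
      have : (ω - 1) * (ω ^ 2 + ω + 1) = ω ^ 3 - 1 := by ring
      rw [this, hω3, sub_self]
    rcases mul_eq_zero.1 hfac with h1 | h2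
    · exact absurd (sub_eq_zero.1 h1) hωne
    · exact h2
  refine ⟨2 * ω + 1, ?_⟩
  have : (2 * ω + 1) ^ 2 = 4 * (ω ^ 2 + ω + 1) - 3 := by ring
  rw [this, hrel]; ring

/-- Thue's lemma step: a small nonzero multiple of `p` of the form `a² + 3b²`. -/
lemma aux_thue (p : ℕ) (hp : p.Prime) (y : ZMod p) (hy : y ^ 2 = -3) :
    ∃ a b : ℤ, 0 < a ^ 2 + 3 * b ^ 2 ∧ a ^ 2 + 3 * b ^ 2 < 4 * p ∧
      (p : ℤ) ∣ a ^ 2 + 3 * b ^ 2 := by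
  haveI : Fact p.Prime := ⟨hp⟩
  set r := Nat.sqrt p with hr
  have hr2 : r * r < p := by
    rcases lt_or_eq_of_le (Nat.sqrt_le p) with h | h
    · exact h
    · exfalso
      have hdvd : r ∣ p := ⟨r, h.symm⟩
      rcases (Nat.Prime.eq_one_or_self_of_dvd hp r hdvd) with h1 | h1
      · rw [← hr, h1] at h; have := hp.two_le; omega
      · rw [← hr, h1] at h; nlinarith [hp.two_le]
  have hcard : Fintype.card (ZMod p) < Fintype.card (Fin (r + 1) × Fin (r + 1)) := by
    simp [ZMod.card]
    calc p < (r + 1) * (r + 1) := Nat.lt_succ_sqrt p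
    _ = _ := by ring
  obtain ⟨x, x', hne, hfeq⟩ := Fintype.exists_ne_map_eq_of_card_lt
    (fun z : Fin (r + 1) × Fin (r + 1) => (z.1 : ZMod p) - y * (z.2 : ZMod p)) hcard
  set a : ℤ := (x.1 : ℤ) - (x'.1 : ℤ) with ha
  set b : ℤ := (x.2 : ℤ) - (x'.2 : ℤ) with hb
  have hab : (a : ZMod p) = y * (b : ZMod p) := by
    simp only [ha, hb]
    push_cast
    have := hfeq
    linear_combination this
  refine ⟨a, b, ?_, ?_, ?_⟩
  · rcases eq_or_ne a 0 with h0 | h0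
    · rcases eq_or_ne b 0 with h1 | h1
      · exfalso
        apply hne
        have e1 : (x.1 : ℤ) = (x'.1 : ℤ) := by omega
        have e2 : (x.2 : ℤ) = (x'.2 : ℤ) := by omega
        have e1' : x.1 = x'.1 := Fin.ext (by exact_mod_cast e1)
        have e2' : x.2 = x'.2 := Fin.ext (by exact_mod_cast e2)
        exact Prod.ext e1' e2'
      · positivity
    · positivity
  · have ba1 : a ^ 2 ≤ (r : ℤ) ^ 2 := by
      have h1 : (x.1 : ℤ) ≤ r := by exact_mod_cast Nat.lt_succ_iff.1 x.1.isLt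
      have h2 : (x'.1 : ℤ) ≤ r := by exact_mod_cast Nat.lt_succ_iff.1 x'.1.isLt
      have h3 : (0:ℤ) ≤ x.1 := Int.natCast_nonneg _
      have h4 : (0:ℤ) ≤ x'.1 := Int.natCast_nonneg _
      nlinarith
    have bb1 : b ^ 2 ≤ (r : ℤ) ^ 2 := by
      have h1 : (x.2 : ℤ) ≤ r := by exact_mod_cast Nat.lt_succ_iff.1 x.2.isLt
      have h2 : (x'.2 : ℤ) ≤ r := by exact_mod_cast Nat.lt_succ_iff.1 x'.2.isLt
      have h3 : (0:ℤ) ≤ x.2 := Int.natCast_nonneg _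
      have h4 : (0:ℤ) ≤ x'.2 := Int.natCast_nonneg _
      nlinarith
    have : (r : ℤ) * r < p := by exact_mod_cast hr2
    nlinarith
  · rw [← ZMod.intCast_zmod_eq_zero_iff_dvd]
    push_cast
    rw [hab]
    linear_combination ((b : ZMod p) ^ 2) * hy

/-- Descent: from `a² + 3b² = kp` with `0 < kp < 4p` to `p = x² + 3y²`. -/
lemma aux_descent (p : ℕ) (hp : p.Prime) (hmod : p % 3 = 1) (a b : ℤ)
    (hpos : 0 < a ^ 2 + 3 * b ^ 2) (hlt : a ^ 2 + 3 * b ^ 2 < 4 * p)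
    (hdvd : (p : ℤ) ∣ a ^ 2 + 3 * b ^ 2) :
    ∃ x y : ℤ, (p : ℤ) = x ^ 2 + 3 * y ^ 2 := by
  obtain ⟨k, hk⟩ := hdvd
  have hp0 : (0:ℤ) < p := by exact_mod_cast hp.pos
  have hk0 : 0 < k := by nlinarith
  have hk4 : k < 4 := by nlinarith
  interval_cases k
  · exact ⟨a, b, by linarith⟩
  · -- a^2 + 3b^2 = 2p impossible mod 4
    exfalso
    have hne2 : p ≠ 2 := by omega
    have hodd : p % 2 = 1 := Nat.odd_iff.1 (hp.odd_of_ne_two hne2)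
    obtain ⟨m, hm⟩ : ∃ m : ℕ, p = 2 * m + 1 := ⟨p / 2, by omega⟩
    have hcast : ((a ^ 2 + 3 * b ^ 2 : ℤ) : ZMod 4) = ((p : ℤ) * 2 : ℤ) := by
      exact_mod_cast congrArg (fun z : ℤ => (z : ZMod 4)) hk
    rw [hm] at hcast
    push_cast at hcast
    have h40 : (4 : ZMod 4) = 0 := by decide
    have e : (a : ZMod 4) ^ 2 + 3 * (b : ZMod 4) ^ 2 = 2 := by
      linear_combination hcast + (m : ZMod 4) * h40
    exact (by decide : ∀ u v : ZMod 4, u ^ 2 + 3 * v ^ 2 ≠ 2) _ _ e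
  · -- k = 3 : 3 ∣ a
    have h3a : (3:ℤ) ∣ a ^ 2 := ⟨p - b ^ 2, by linarith⟩
    have h3a' : (3:ℤ) ∣ a := Int.Prime.dvd_pow' (by norm_num) h3a
    obtain ⟨c, rfl⟩ := h3a'
    exact ⟨b, c, by nlinarith⟩

/-- A prime p ≡ 1 (mod 3) is represented by the Eisenstein norm form a² − ab + b². -/
theorem prime_one_mod_three_eq_norm_form (p : ℕ) (hp : p.Prime) (h : p % 3 = 1) :
    ∃ a b : ℤ, (p : ℤ) = a ^ 2 - a * b + b ^ 2 := by
  obtain ⟨y, hy⟩ := aux_neg_three_is_sq p hp h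
  obtain ⟨a, b, hpos, hlt, hdvd⟩ := aux_thue p hp y hy
  obtain ⟨x, z, hxz⟩ := aux_descent p hp h a b hpos hlt hdvd
  exact ⟨x + z, 2 * z, by rw [hxz]; ring⟩
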